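/- Let m, n ∈ ℕ with m ≥ 3 odd and ℓ := ⌊m/2⌋. Let P be a nonempty independent set of the cycle Z_m^1 (i.e., a set P ⊆ ZMod m containing no two cyclically consecutive residues), and let A ⊆ ∪_{p ∈ P} E_m^n(p). Writing α_p := |A ∩ E_m^n(p)| / m^(n−1) for p ∈ P, one has |N_{Z_m^n}(A)| ≥ |A| + max_{p ∈ P} |A ∩ E_m^n(p)| + (m^(n−1)/√(ℓ³·m·n)) · Σ_{p ∈ P} α_p·(1 − α_p). -/

import Mathlib

set_option maxHeartbeats 1600000

section Stmt19Aux
open Finset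

variable {m k : ℕ}

lemma sqrtStep (k : ℕ) (hk : 0 < k) :
    Real.sqrt (2*(k:ℝ)) ≤ Real.sqrt (2*((k:ℝ)+1)) * (1 - 1/(2*((k:ℝ)+1))) := by
  set R := Real.sqrt (2*(k:ℝ)) with hR
  set R' := Real.sqrt (2*((k:ℝ)+1)) with hR'
  have hkR : (1:ℝ) ≤ (k:ℝ) := by exact_mod_cast hk
  have hR'pos : 0 < R' := Real.sqrt_pos.2 (by positivity)
  have hR'sq : R'^2 = 2*((k:ℝ)+1) := Real.sq_sqrt (by positivity)
  have hRsq : R^2 = 2*(k:ℝ) := Real.sq_sqrt (by positivity)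
  have hRnn : 0 ≤ R := Real.sqrt_nonneg _
  have hRR' : R ≤ R' := Real.sqrt_le_sqrt (by linarith)
  have hdiff : (R' - R) * (R' + R) = 2 := by nlinarith
  have hkey : 1 ≤ R'*(R' - R) := by nlinarith
  have e : R' * (1 - 1/(2*((k:ℝ)+1))) = R' - 1/R' := by
    rw [← hR'sq]; field_simp
  rw [e]
  have h8 : 1/R' ≤ R' - R := by
    rw [div_le_iff₀ hR'pos]; nlinarith
  linarith

lemma coreNum (k : ℕ) (mR lR N' S Q xs xr L : ℝ)
    (hml : mR = 2*lR+1) (hl : 1 ≤ lR)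
    (hN' : N' = mR^k)
    (hS0 : 0 ≤ S) (hSm : S ≤ mR*N')
    (pop : Q ≤ (xs + xr)*S - mR*(xs*xr))
    (hmean1 : S ≤ mR*xs) (hmean2 : mR*xr ≤ S)
    (hint : k = 0 → Q = S)
    (hL0 : 0 ≤ L)
    (sum1 : (S - Q/N')/(lR^2*Real.sqrt (2*(k:ℝ))) ≤ L)
    (tele : xs - xr ≤ L) :
    (S*(N'*mR - S)/(N'*mR))/(lR^2*Real.sqrt (2*((k:ℝ)+1))) ≤ L := by
  have hm0 : (0:ℝ) < mR := by nlinarith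
  have hN0 : (0:ℝ) < N' := by rw [hN']; positivity
  set R := Real.sqrt (2*(k:ℝ)) with hRdef
  set R' := Real.sqrt (2*((k:ℝ)+1)) with hR'def
  have hR'pos : 0 < R' := Real.sqrt_pos.2 (by positivity)
  have hR'sq : R'^2 = 2*((k:ℝ)+1) := Real.sq_sqrt (by positivity)
  have hRnn : 0 ≤ R := Real.sqrt_nonneg _
  set φ := S * (N' * mR - S) / (N' * mR) with hφdef
  have hφ0 : 0 ≤ φ := div_nonneg (mul_nonneg hS0 (by linarith)) (by positivity)
  have hφ4 : φ ≤ N' * mR / 4 := by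
    rw [hφdef, div_le_div_iff₀ (by positivity) (by norm_num)]
    nlinarith [sq_nonneg (2*S - N'*mR)]
  have hφeq : φ = S - S^2/(N'*mR) := by rw [hφdef]; field_simp
  have hcm : (0:ℝ) < 2*((k:ℝ)+1) := by positivity
  by_cases hc : Q/N' - S^2/(N'*mR) ≤ φ / (2*((k:ℝ)+1))
  · rcases Nat.eq_zero_or_pos k with hk0 | hkpos
    · have hQS : Q = S := hint hk0
      have hN1 : N' = 1 := by rw [hN', hk0, pow_zero]
      have hveq : Q/N' - S^2/(N'*mR) = φ := by rw [hφeq, hQS, hN1]; ring_nf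
      rw [hveq] at hc
      have hφz : φ = 0 := by
        have : φ ≤ 0 := by rw [le_div_iff₀ hcm] at hc; nlinarith
        linarith
      rw [hφz]; simp only [zero_div]; exact hL0
    · have hRpos : 0 < R := Real.sqrt_pos.2 (by positivity)
      have h7 : R ≤ R' * (1 - 1/(2*((k:ℝ)+1))) := sqrtStep k hkpos
      have h5 : φ * (1 - 1/(2*((k:ℝ)+1))) ≤ S - Q/N' := by
        have e : φ * (1 - 1/(2*((k:ℝ)+1))) = φ - φ/(2*((k:ℝ)+1)) := by ring
        have e2 : S - Q/N' = φ - (Q/N' - S^2/(N'*mR)) := by rw [hφeq]; ring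
        rw [e, e2]; linarith
      have h6 : φ / (lR^2*R') ≤ (S - Q/N')/(lR^2*R) := by
        rw [div_le_div_iff₀ (by positivity) (by positivity)]
        calc φ * (lR^2*R) ≤ φ * (lR^2*(R' * (1 - 1/(2*((k:ℝ)+1))))) := by
              apply mul_le_mul_of_nonneg_left _ hφ0
              exact mul_le_mul_of_nonneg_left h7 (by positivity)
          _ = (φ * (1 - 1/(2*((k:ℝ)+1)))) * (lR^2*R') := by ring
          _ ≤ (S - Q/N') * (lR^2*R') := mul_le_mul_of_nonneg_right h5 (by positivity)
      linarith
  · push_neg at hc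
    by_cases hφz : φ ≤ 0
    · have hdiv : φ/(lR^2*R') ≤ 0 := div_nonpos_of_nonpos_of_nonneg hφz (by positivity)
      linarith
    · push_neg at hφz
      have hd0 : 0 ≤ xs - xr := by nlinarith
      have pop2 : 4*(Q*mR - S^2) ≤ (mR*(xs - xr))^2 := by
        nlinarith [sq_nonneg (mR*(xs + xr) - 2*S)]
      have hv : Q*mR - S^2 = (N'*mR) * (Q/N' - S^2/(N'*mR)) := by field_simp
      have d0' : (N'*mR)*φ ≤ (Q*mR - S^2)*(2*((k:ℝ)+1)) := by
        have hφc : φ < (Q/N' - S^2/(N'*mR))*(2*((k:ℝ)+1)) := (div_lt_iff₀ hcm).1 hc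
        calc (N'*mR)*φ ≤ (N'*mR)*((Q/N' - S^2/(N'*mR))*(2*((k:ℝ)+1))) :=
              mul_le_mul_of_nonneg_left hφc.le (by positivity)
          _ = ((N'*mR) * (Q/N' - S^2/(N'*mR)))*(2*((k:ℝ)+1)) := by ring
          _ = (Q*mR - S^2)*(2*((k:ℝ)+1)) := by rw [← hv]
      have h2mL : (mR*(xs - xr))^2 ≤ (mR*L)^2 := by
        have hmd : mR*(xs - xr) ≤ mR*L := mul_le_mul_of_nonneg_left tele hm0.le
        have hmd0 : 0 ≤ mR*(xs - xr) := mul_nonneg hm0.le hd0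
        nlinarith
      have d1' : 4*((N'*mR)*φ) ≤ (mR*L)^2*(2*((k:ℝ)+1)) := by
        have p3 := mul_le_mul_of_nonneg_right pop2 hcm.le
        have p4 := mul_le_mul_of_nonneg_right h2mL hcm.le
        linarith
      have d2 : 4*N'*φ ≤ L^2*(2*((k:ℝ)+1))*mR := by
        have e : 4*((N'*mR)*φ) = (4*N'*φ)*mR := by ring
        have e2 : (mR*L)^2*(2*((k:ℝ)+1)) = (L^2*(2*((k:ℝ)+1))*mR)*mR := by ring
        rw [e, e2] at d1'
        exact le_of_mul_le_mul_right d1' hm0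
      have hm4l : mR ≤ 4*lR^2 := by nlinarith
      have hφub : φ*mR ≤ 4*N'*lR^4 := by
        have h1' : φ*mR ≤ (N'*mR/4)*mR := mul_le_mul_of_nonneg_right hφ4 hm0.le
        have hsqm : mR^2 ≤ 16*lR^4 := by nlinarith
        have h2' := mul_le_mul_of_nonneg_left hsqm hN0.le
        nlinarith [h1', h2']
      have hsq : φ^2 ≤ (L*(lR^2*R'))^2 := by
        have e : (L*(lR^2*R'))^2 = L^2*(2*((k:ℝ)+1))*lR^4 := by
          rw [mul_pow, mul_pow, hR'sq]; ring
        rw [e]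
        have d3 : (4*N'*φ)*lR^4 ≤ (L^2*(2*((k:ℝ)+1))*mR)*lR^4 :=
          mul_le_mul_of_nonneg_right d2 (by positivity)
        have d4 : φ^2*mR ≤ (L^2*(2*((k:ℝ)+1))*lR^4)*mR := by nlinarith
        exact le_of_mul_le_mul_right d4 hm0
      have hfin : φ ≤ L*(lR^2*R') := by
        nlinarith [mul_nonneg hL0 (show (0:ℝ) ≤ lR^2*R' by positivity)]
      rw [div_le_iff₀ (by positivity)]
      linarith

lemma sqBound (a s r : ℝ) (h1 : a ≤ s) (h2 : r ≤ a) : a^2 ≤ (s+r)*a - s*r := by nlinarith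

lemma cyc {m : ℕ} [NeZero m] (x : ZMod m → ℝ) (s r : ZMod m) :
    x s - x r ≤ ∑ t : ZMod m, max 0 (x (t-1) - x t) := by
  set d := (r - s).val with hd
  have hr : r = s + (d : ZMod m) := by
    rw [hd, ZMod.natCast_val, ZMod.cast_id]; ring
  have tele : x s - x r = ∑ i ∈ Finset.range d, (x (s + (i:ZMod m)) - x (s + ((i+1:ℕ):ZMod m))) := by
    rw [Finset.sum_range_sub' (fun i => x (s + (i:ZMod m))) d]
    rw [hr]; norm_num
  rw [tele]
  have hterm : ∀ i ∈ Finset.range d,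
      x (s + (i:ZMod m)) - x (s + ((i+1:ℕ):ZMod m))
        ≤ max 0 (x ((s + ((i+1:ℕ):ZMod m)) - 1) - x (s + ((i+1:ℕ):ZMod m))) := by
    intro i _
    have : (s + ((i+1:ℕ):ZMod m)) - 1 = s + (i:ZMod m) := by push_cast; ring
    rw [this]; exact le_max_right _ _
  refine le_trans (Finset.sum_le_sum hterm) ?_
  have hinj : ∀ i ∈ Finset.range d, ∀ j ∈ Finset.range d,
      (s + ((i+1:ℕ):ZMod m)) = (s + ((j+1:ℕ):ZMod m)) → i = j := by
    intro i hi j hj hij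
    have hdm : d < m := ZMod.val_lt _
    have hi' : i < m := lt_trans (Finset.mem_range.1 hi) hdm
    have hj' : j < m := lt_trans (Finset.mem_range.1 hj) hdm
    have : ((i:ℕ) : ZMod m) = ((j:ℕ) : ZMod m) := by
      have h1 : ((i+1:ℕ):ZMod m) = ((j+1:ℕ):ZMod m) := by
        have := add_left_cancel hij; exact this
      push_cast at h1 ⊢; linear_combination h1
    have := congrArg ZMod.val this
    rwa [ZMod.val_cast_of_lt hi', ZMod.val_cast_of_lt hj'] at this
  calc ∑ i ∈ Finset.range d, max 0 (x ((s + ((i+1:ℕ):ZMod m)) - 1) - x (s + ((i+1:ℕ):ZMod m)))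
      = ∑ t ∈ (Finset.range d).image (fun i => s + ((i+1:ℕ):ZMod m)), max 0 (x (t-1) - x t) := by
        rw [Finset.sum_image hinj]
    _ ≤ ∑ t : ZMod m, max 0 (x (t-1) - x t) := by
        apply Finset.sum_le_sum_of_subset_of_nonneg (Finset.subset_univ _)
        intro t _ _; exact le_max_left _ _

lemma core {m ℓ : ℕ} [NeZero m] (hm : m = 2*ℓ+1) (hl : 1 ≤ ℓ) (k : ℕ)
    (x M : ZMod m → ℝ)
    (hx0 : ∀ t, 0 ≤ x t) (hx1 : ∀ t, x t ≤ (m:ℝ)^k)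
    (hint : k = 0 → ∀ t, x t * x t = x t)
    (h1 : ∀ t, x t + (x t * ((m:ℝ)^k - x t)/(m:ℝ)^k)/((ℓ:ℝ)^2*Real.sqrt (2*(k:ℝ))) ≤ M t)
    (h2 : ∀ t, x (t-1) ≤ M t) :
    (∑ t, x t) + ((∑ t, x t) * ((m:ℝ)^(k+1) - ∑ t, x t)/(m:ℝ)^(k+1))
        /((ℓ:ℝ)^2*Real.sqrt (2*((k:ℝ)+1))) ≤ ∑ t, M t := by
  have hlR : (1:ℝ) ≤ (ℓ:ℝ) := by exact_mod_cast hl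
  have hmlR : (m:ℝ) = 2*(ℓ:ℝ)+1 := by exact_mod_cast congrArg (Nat.cast : ℕ → ℝ) hm
  have hm0 : (0:ℝ) < m := by rw [hmlR]; linarith
  set N' : ℝ := (m:ℝ)^k with hN'
  have hN0 : (0:ℝ) < N' := by positivity
  set S := ∑ t, x t with hS
  set Q := ∑ t, x t^2 with hQ
  set R := Real.sqrt (2*(k:ℝ)) with hRdef
  have hRnn : 0 ≤ R := Real.sqrt_nonneg _
  have cardu : (Finset.univ : Finset (ZMod m)).card = m := by
    rw [Finset.card_univ, ZMod.card]
  have hS0 : 0 ≤ S := Finset.sum_nonneg fun t _ => hx0 t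
  have hSm : S ≤ m * N' := by
    calc S ≤ (Finset.univ : Finset (ZMod m)).card • N' :=
          Finset.sum_le_card_nsmul _ _ _ (fun t _ => hx1 t)
      _ = m * N' := by rw [cardu, nsmul_eq_mul]
  obtain ⟨s0, -, hs0⟩ := Finset.exists_max_image Finset.univ x ⟨0, Finset.mem_univ 0⟩
  obtain ⟨r0, -, hr0⟩ := Finset.exists_min_image Finset.univ x ⟨0, Finset.mem_univ 0⟩
  have pop : Q ≤ (x s0 + x r0) * S - m * (x s0 * x r0) := by
    calc Q ≤ ∑ t, ((x s0 + x r0) * x t - x s0 * x r0) :=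
          Finset.sum_le_sum fun t _ =>
            sqBound (x t) (x s0) (x r0) (hs0 t (Finset.mem_univ t)) (hr0 t (Finset.mem_univ t))
      _ = (x s0 + x r0) * S - m * (x s0 * x r0) := by
          rw [Finset.sum_sub_distrib, ← Finset.mul_sum, Finset.sum_const, cardu,
            nsmul_eq_mul]
  have hmean1 : S ≤ m * x s0 := by
    calc S ≤ (Finset.univ : Finset (ZMod m)).card • x s0 :=
          Finset.sum_le_card_nsmul _ _ _ (fun t _ => hs0 t (Finset.mem_univ t))
      _ = m * x s0 := by rw [cardu, nsmul_eq_mul]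
  have hmean2 : (m:ℝ) * x r0 ≤ S := by
    calc (m:ℝ) * x r0 = (Finset.univ : Finset (ZMod m)).card • x r0 := by
          rw [cardu, nsmul_eq_mul]
      _ ≤ S := Finset.card_nsmul_le_sum _ _ _ (fun t _ => hr0 t (Finset.mem_univ t))
  have hMx : ∀ t, x t ≤ M t := by
    intro t
    have hnn : 0 ≤ (x t * ((m:ℝ)^k - x t)/(m:ℝ)^k)/((ℓ:ℝ)^2*R) := by
      apply div_nonneg _ (by positivity)
      exact div_nonneg (mul_nonneg (hx0 t) (sub_nonneg.2 (hx1 t))) (by positivity)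
    linarith [h1 t]
  have hsum_split : ∑ t, (M t - x t) = (∑ t, M t) - S := Finset.sum_sub_distrib _ _
  have tele : x s0 - x r0 ≤ (∑ t, M t) - S := by
    rw [← hsum_split]
    refine le_trans (cyc x s0 r0) (Finset.sum_le_sum fun t _ => ?_)
    exact max_le (by linarith [hMx t]) (by linarith [h2 t])
  have hSM : S ≤ ∑ t, M t := Finset.sum_le_sum fun t _ => hMx t
  have sum1 : (S - Q/N')/((ℓ:ℝ)^2*R) ≤ (∑ t, M t) - S := by
    have e2 : ∑ t, (x t * (N' - x t)/N') = S - Q/N' := by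
      rw [← Finset.sum_div]
      rw [show ∑ t, x t * (N' - x t) = S * N' - Q by
        rw [hS, hQ, Finset.sum_mul, ← Finset.sum_sub_distrib]
        exact Finset.sum_congr rfl fun t _ => by ring]
      field_simp
    have e1 : ∑ t, (x t + (x t * (N' - x t)/N')/((ℓ:ℝ)^2*R))
        = S + (S - Q/N')/((ℓ:ℝ)^2*R) := by
      rw [Finset.sum_add_distrib, ← Finset.sum_div, e2]
    have := Finset.sum_le_sum fun t (_ : t ∈ Finset.univ) => h1 t
    rw [e1] at this
    linarith
  have hintQS : k = 0 → Q = S := by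
    intro hk0
    rw [hQ, hS]
    exact Finset.sum_congr rfl fun t _ => by rw [sq]; exact hint hk0 t
  have main := coreNum k (m:ℝ) (ℓ:ℝ) N' S Q (x s0) (x r0) ((∑ t, M t) - S)
    hmlR hlR hN' hS0 hSm pop hmean1 hmean2 hintQS (by linarith) sum1 tele
  have e3 : (m:ℝ)^(k+1) = N' * (m:ℝ) := by rw [hN', pow_succ]
  rw [e3]
  linarith [main]

def upc (B : Finset (Fin k → ZMod m)) : Finset (Fin k → ZMod m) :=
  B ∪ Finset.univ.biUnion fun j : Fin k => B.image (· + Pi.single j 1)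

def slc (B : Finset (Fin (k+1) → ZMod m)) (t : ZMod m) : Finset (Fin k → ZMod m) :=
  (B.filter fun v => v 0 = t).image (· ∘ Fin.succ)

lemma mem_slc {B : Finset (Fin (k+1) → ZMod m)} {t : ZMod m} {w : Fin k → ZMod m} :
    w ∈ slc B t ↔ ∃ v ∈ B, v 0 = t ∧ v ∘ Fin.succ = w := by
  simp [slc, Finset.mem_image, Finset.mem_filter, and_assoc]

lemma mem_upc {B x} : x ∈ upc (m := m) (k := k) B ↔
    x ∈ B ∨ ∃ j, ∃ v ∈ B, v + Pi.single j 1 = x := by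
  simp only [upc, Finset.mem_union, Finset.mem_biUnion, Finset.mem_univ, true_and,
    Finset.mem_image]

lemma subset_upc (B : Finset (Fin k → ZMod m)) : B ⊆ upc B := Finset.subset_union_left

lemma slc_card_sum [NeZero m] (B : Finset (Fin (k+1) → ZMod m)) :
    B.card = ∑ t : ZMod m, (slc B t).card := by
  rw [Finset.card_eq_sum_card_fiberwise (f := fun v => v 0) (t := Finset.univ)
    (fun x _ => Finset.mem_univ _)]
  refine Finset.sum_congr rfl fun t _ => ?_
  rw [slc, Finset.card_image_of_injOn]
  intro u hu w hw h
  rw [Finset.mem_coe, Finset.mem_filter] at hu hw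
  funext i
  refine Fin.cases ?_ ?_ i
  · rw [hu.2, hw.2]
  · exact fun j => congrFun h j

lemma slc_subset (B : Finset (Fin (k+1) → ZMod m)) (t : ZMod m) :
    upc (slc B t) ⊆ slc (upc B) t := by
  apply Finset.union_subset
  · exact Finset.image_subset_image (Finset.filter_subset_filter _ (subset_upc B))
  · rw [Finset.biUnion_subset]
    intro j _
    intro w hw
    rw [Finset.mem_image] at hw
    obtain ⟨u, hu, rfl⟩ := hw
    rw [mem_slc] at hu
    obtain ⟨v, hv, hv0, rfl⟩ := hu
    rw [mem_slc]
    refine ⟨v + Pi.single j.succ 1, ?_, ?_, ?_⟩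
    · rw [mem_upc]; exact Or.inr ⟨j.succ, v, hv, rfl⟩
    · simp [Pi.single_apply, (Fin.succ_ne_zero j).symm, hv0]
    · funext i
      simp [Pi.single_apply, Fin.succ_inj]

lemma slc_shift (B : Finset (Fin (k+1) → ZMod m)) (t : ZMod m) :
    slc B (t - 1) ⊆ slc (upc B) t := by
  intro w hw
  rw [mem_slc] at hw
  obtain ⟨v, hv, hv0, rfl⟩ := hw
  rw [mem_slc]
  refine ⟨v + Pi.single 0 1, ?_, ?_, ?_⟩
  · rw [mem_upc]; exact Or.inr ⟨0, v, hv, rfl⟩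
  · simp [hv0]
  · funext i
    simp [Pi.single_apply, Fin.succ_ne_zero]

lemma slc_card_le [NeZero m] (B : Finset (Fin (k+1) → ZMod m)) (t : ZMod m) :
    (slc B t).card ≤ m^k := by
  calc (slc B t).card ≤ Fintype.card (Fin k → ZMod m) := Finset.card_le_univ _
    _ = m^k := by rw [Fintype.card_fun, ZMod.card, Fintype.card_fin]

theorem Tprime {m ℓ : ℕ} [NeZero m] (hm : m = 2*ℓ+1) (hl : 1 ≤ ℓ) :
    ∀ (k : ℕ) (B : Finset (Fin k → ZMod m)),
    (B.card:ℝ) + ((B.card:ℝ) * ((m:ℝ)^k - B.card)/(m:ℝ)^k)/((ℓ:ℝ)^2*Real.sqrt (2*(k:ℝ)))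
      ≤ ((upc B).card:ℝ) := by
  intro k
  induction k with
  | zero =>
    intro B
    simp only [Nat.cast_zero, mul_zero, Real.sqrt_zero, pow_zero, div_zero, add_zero]
    exact_mod_cast Finset.card_le_card (subset_upc B)
  | succ k ih =>
    intro B
    have key := core (m := m) (ℓ := ℓ) hm hl k
      (fun t => ((slc B t).card : ℝ)) (fun t => ((slc (upc B) t).card : ℝ))
      (fun t => by positivity)
      (fun t => by show ((slc B t).card : ℝ) ≤ _; exact_mod_cast slc_card_le B t)
      (by
        intro hk0 t
        subst hk0
        show ((slc B t).card : ℝ) * ((slc B t).card : ℝ) = ((slc B t).card : ℝ)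
        have h1 : (slc B t).card ≤ 1 := by
          have := slc_card_le B t
          simpa using this
        interval_cases h : (slc B t).card <;> norm_num)
      (by
        intro t
        have hsub := Finset.card_le_card (slc_subset B t)
        have := ih (slc B t)
        calc ((slc B t).card : ℝ) + _ ≤ ((upc (slc B t)).card : ℝ) := this
          _ ≤ ((slc (upc B) t).card : ℝ) := by exact_mod_cast hsub)
      (by
        intro t
        show ((slc B (t-1)).card : ℝ) ≤ ((slc (upc B) t).card : ℝ)
        exact_mod_cast Finset.card_le_card (slc_shift B t))
    rw [← Nat.cast_sum, ← Nat.cast_sum, ← slc_card_sum B, ← slc_card_sum (upc B)] at key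
    have ecast : ((k:ℝ)+1) = ((k+1 : ℕ):ℝ) := by push_cast; ring
    rw [ecast] at key
    exact key

def upT {n : ℕ} (B : Finset (Fin n → ZMod m)) : Finset (Fin n → ZMod m) :=
  Finset.univ.biUnion fun j : Fin n => B.image (· + Pi.single j 1)

def dnT {n : ℕ} (B : Finset (Fin n → ZMod m)) : Finset (Fin n → ZMod m) :=
  Finset.univ.biUnion fun j : Fin n => B.image (· - Pi.single j 1)

lemma mem_upT {n : ℕ} {B : Finset (Fin n → ZMod m)} {x} :
    x ∈ upT B ↔ ∃ j, ∃ v ∈ B, v + Pi.single j 1 = x := by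
  simp only [upT, Finset.mem_biUnion, Finset.mem_univ, true_and, Finset.mem_image]

lemma mem_dnT {n : ℕ} {B : Finset (Fin n → ZMod m)} {x} :
    x ∈ dnT B ↔ ∃ j, ∃ v ∈ B, v - Pi.single j 1 = x := by
  simp only [dnT, Finset.mem_biUnion, Finset.mem_univ, true_and, Finset.mem_image]

lemma sum_single {n : ℕ} (j : Fin n) : ∑ i, Pi.single j (1 : ZMod m) i = 1 := by
  simp [Pi.single_apply]

lemma sum_shift {n : ℕ} (v : Fin n → ZMod m) (j : Fin n) :
    ∑ i, (v + Pi.single j 1 : Fin n → ZMod m) i = (∑ i, v i) + 1 := by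
  simp only [Pi.add_apply]
  rw [Finset.sum_add_distrib, sum_single]



lemma sum_shift' {n : ℕ} (v : Fin n → ZMod m) (j : Fin n) :
    ∑ i, (v - Pi.single j 1 : Fin n → ZMod m) i = (∑ i, v i) - 1 := by
  simp only [Pi.sub_apply]
  rw [Finset.sum_sub_distrib, sum_single]

lemma upT_class {n : ℕ} {B : Finset (Fin n → ZMod m)} {p : ZMod m}
    (hB : ∀ v ∈ B, ∑ i, v i = p) : ∀ x ∈ upT B, ∑ i, x i = p + 1 := by
  intro x hx
  rw [mem_upT] at hx
  obtain ⟨j, v, hv, rfl⟩ := hx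
  rw [sum_shift, hB v hv]

lemma dnT_class {n : ℕ} {B : Finset (Fin n → ZMod m)} {p : ZMod m}
    (hB : ∀ v ∈ B, ∑ i, v i = p) : ∀ x ∈ dnT B, ∑ i, x i = p - 1 := by
  intro x hx
  rw [mem_dnT] at hx
  obtain ⟨j, v, hv, rfl⟩ := hx
  rw [sum_shift', hB v hv]

lemma phi_inj {p : ZMod m} {v w : Fin (k+1) → ZMod m}
    (hv : ∑ i, v i = p) (hw : ∑ i, w i = p) (h : v ∘ Fin.succ = w ∘ Fin.succ) : v = w := by
  rw [Fin.sum_univ_succ] at hv hw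
  funext i
  refine Fin.cases ?_ (fun j => congrFun h j) i
  have hsum : ∑ i : Fin k, v i.succ = ∑ i : Fin k, w i.succ :=
    Finset.sum_congr rfl fun i _ => congrFun h i
  have h2 := hv.trans hw.symm
  rw [hsum] at h2
  exact add_right_cancel h2

lemma image_upT (B : Finset (Fin (k+1) → ZMod m)) :
    (upT B).image (· ∘ Fin.succ) = upc (B.image (· ∘ Fin.succ)) := by
  ext w
  simp only [Finset.mem_image, mem_upT, upc, Finset.mem_union, Finset.mem_biUnion,
    Finset.mem_univ, true_and]
  constructor
  · rintro ⟨x, ⟨j, v, hv, rfl⟩, rfl⟩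
    refine Fin.cases ?_ ?_ j
    · left
      exact ⟨v, hv, by funext i; simp [Pi.single_apply, (Fin.succ_ne_zero i).symm]⟩
    · intro j'
      right
      refine ⟨j', ⟨v ∘ Fin.succ, ⟨v, hv, rfl⟩, ?_⟩⟩
      funext i
      simp [Pi.single_apply, Fin.succ_inj]
  · rintro (⟨v, hv, rfl⟩ | ⟨j', ⟨w', ⟨v, hv, rfl⟩, rfl⟩⟩)
    · refine ⟨v + Pi.single 0 1, ⟨0, v, hv, rfl⟩, ?_⟩
      funext i
      simp [Pi.single_apply, Fin.succ_ne_zero]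
    · refine ⟨v + Pi.single j'.succ 1, ⟨j'.succ, v, hv, rfl⟩, ?_⟩
      funext i
      simp [Pi.single_apply, Fin.succ_inj]

lemma dnT_eq_neg_upT_neg {n : ℕ} (B : Finset (Fin n → ZMod m)) :
    dnT B = (upT (B.image (fun v => -v))).image (fun v => -v) := by
  ext x
  simp only [mem_dnT, Finset.mem_image, mem_upT]
  constructor
  · rintro ⟨j, v, hv, rfl⟩
    exact ⟨(-v) + Pi.single j 1, ⟨j, -v, ⟨v, hv, rfl⟩, rfl⟩, by funext i; simp; ring⟩
  · rintro ⟨y, ⟨j, w, ⟨v, hv, rfl⟩, rfl⟩, rfl⟩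
    exact ⟨j, v, hv, by funext i; simp; ring⟩

lemma percUp {ℓ : ℕ} [NeZero m] (hm : m = 2*ℓ+1) (hl : 1 ≤ ℓ)
    (B : Finset (Fin (k+1) → ZMod m)) {p : ZMod m} (hB : ∀ v ∈ B, ∑ i, v i = p) :
    (B.card:ℝ) + ((B.card:ℝ) * ((m:ℝ)^k - B.card)/(m:ℝ)^k)/((ℓ:ℝ)^2*Real.sqrt (2*(k:ℝ)))
      ≤ ((upT B).card:ℝ) := by
  have h1 : (B.image (· ∘ Fin.succ)).card = B.card :=
    Finset.card_image_of_injOn fun v hv w hw h =>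
      phi_inj (hB v (Finset.mem_coe.1 hv)) (hB w (Finset.mem_coe.1 hw)) h
  have h2 : ((upT B).image (· ∘ Fin.succ)).card = (upT B).card :=
    Finset.card_image_of_injOn fun v hv w hw h =>
      phi_inj (upT_class hB v (Finset.mem_coe.1 hv)) (upT_class hB w (Finset.mem_coe.1 hw)) h
  have key := Tprime hm hl k (B.image (· ∘ Fin.succ))
  rw [image_upT] at h2
  rw [h1] at key
  rw [show ((upT B).card : ℝ) = ((upc (B.image (· ∘ Fin.succ))).card : ℝ) by
    exact_mod_cast congrArg Nat.cast h2.symm]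
  exact key

lemma percDn {ℓ : ℕ} [NeZero m] (hm : m = 2*ℓ+1) (hl : 1 ≤ ℓ)
    (B : Finset (Fin (k+1) → ZMod m)) {p : ZMod m} (hB : ∀ v ∈ B, ∑ i, v i = p) :
    (B.card:ℝ) + ((B.card:ℝ) * ((m:ℝ)^k - B.card)/(m:ℝ)^k)/((ℓ:ℝ)^2*Real.sqrt (2*(k:ℝ)))
      ≤ ((dnT B).card:ℝ) := by
  rw [dnT_eq_neg_upT_neg, Finset.card_image_of_injective _ neg_injective]
  have hB' : ∀ w ∈ B.image (fun v => -v), ∑ i, w i = -p := by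
    intro w hw
    rw [Finset.mem_image] at hw
    obtain ⟨v, hv, rfl⟩ := hw
    simp only [Pi.neg_apply]
    rw [Finset.sum_neg_distrib, hB v hv]
  have key := percUp hm hl (B.image (fun v => -v)) hB'
  rw [Finset.card_image_of_injective _ neg_injective] at key
  exact key

lemma classCard [NeZero m] (q : ZMod m) :
    (Finset.univ.filter (fun v : Fin (k+1) → ZMod m => ∑ i, v i = q)).card = m^k := by
  have hcard := Finset.card_image_of_injOn
    (s := Finset.univ.filter (fun v : Fin (k+1) → ZMod m => ∑ i, v i = q))
    (f := (· ∘ Fin.succ))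
    (fun v hv w hw h => phi_inj (Finset.mem_filter.1 (Finset.mem_coe.1 hv)).2
      (Finset.mem_filter.1 (Finset.mem_coe.1 hw)).2 h)
  have himg : (Finset.univ.filter (fun v : Fin (k+1) → ZMod m => ∑ i, v i = q)).image
      (· ∘ Fin.succ) = Finset.univ := by
    apply Finset.eq_univ_of_forall
    intro w
    rw [Finset.mem_image]
    refine ⟨Fin.cons (q - ∑ i, w i) w, ?_, ?_⟩
    · rw [Finset.mem_filter]
      refine ⟨Finset.mem_univ _, ?_⟩
      rw [Fin.sum_univ_succ]
      simp only [Fin.cons_zero, Fin.cons_succ]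
      exact sub_add_cancel q _
    · funext i; simp [Fin.cons_succ]
  rw [← hcard, himg, Finset.card_univ, Fintype.card_fun,
    ZMod.card, Fintype.card_fin]

lemma coeffLe (mR lR X : ℝ) (k : ℕ) (hk : 1 ≤ k) (hml : mR = 2*lR+1) (hl : 1 ≤ lR)
    (hX : 0 ≤ X) :
    X / Real.sqrt (lR^3*mR*((k:ℝ)+1)) ≤ X/(lR^2*Real.sqrt (2*(k:ℝ))) := by
  have hkR : (1:ℝ) ≤ (k:ℝ) := by exact_mod_cast hk
  apply div_le_div_of_nonneg_left hX
  · have : (0:ℝ) < Real.sqrt (2*(k:ℝ)) := Real.sqrt_pos.2 (by linarith)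
    positivity
  · have e : Real.sqrt ((lR^2)^2*(2*(k:ℝ))) = lR^2*Real.sqrt (2*(k:ℝ)) := by
      rw [Real.sqrt_mul (show (0:ℝ) ≤ (lR^2)^2 by positivity) (2*(k:ℝ)),
        Real.sqrt_sq (show (0:ℝ) ≤ lR^2 by positivity)]
    rw [← e]
    apply Real.sqrt_le_sqrt
    have h3 : lR^3*mR*((k:ℝ)+1) = 2*lR^4*(k:ℝ) + 2*lR^4 + lR^3*(k:ℝ) + lR^3 := by
      rw [hml]; ring
    have h4 : (0:ℝ) ≤ lR^3 := by positivity
    have h5 : (0:ℝ) ≤ lR^4 := by positivity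
    have h6 : (0:ℝ) ≤ lR^3*(k:ℝ) := by positivity
    nlinarith [h3, h4, h5, h6]

end Stmt19Aux



/-- The discrete torus `Z_m^n`: the graph on `(ZMod m)^n` where two vertices are adjacent
iff they differ by `±1 (mod m)` in exactly one coordinate. -/
def torus (m n : ℕ) : SimpleGraph (Fin n → ZMod m) :=
  SimpleGraph.fromRel fun u v =>
    ∃ j : Fin n, (u j = v j + 1 ∨ u j = v j - 1) ∧ ∀ i : Fin n, i ≠ j → u i = v i

/-- A set of vertices is independent if its vertices are pairwise non-adjacent. -/
def IsIndep {V : Type*} (G : SimpleGraph V) (s : Set V) : Prop :=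
  s.Pairwise fun u v => ¬ G.Adj u v

/-- `N_G(X) := (⋃ x ∈ X, N_G(x)) \ X`. -/
def nbhd {V : Type*} (G : SimpleGraph V) (X : Set V) : Set V :=
  (⋃ x ∈ X, G.neighborSet x) \ X

/-- `N_G(X, Y) := N_G(X) ∩ Y`. -/
def nbhdIn {V : Type*} (G : SimpleGraph V) (X Y : Set V) : Set V :=
  nbhd G X ∩ Y

/-- `E_m^n(p)`: the vertices of `Z_m^n` whose coordinate sum is `p` modulo `m`. -/
def Eclass (m n : ℕ) (p : ZMod m) : Set (Fin n → ZMod m) :=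
  {v | ∑ i, v i = p}

/-- A maximum independent set: an independent set of the largest possible cardinality. -/
def MaxIndep {V : Type*} (G : SimpleGraph V) (s : Set V) : Prop :=
  IsIndep G s ∧ ∀ t : Set V, IsIndep G t → t.ncard ≤ s.ncard

/-- For a nonempty independent set `P` of the `m`-cycle (no two cyclically consecutive
residues) and `A ⊆ ⋃_{p ∈ P} E_m^n(p)`, writing `α_p := |A ∩ E_m^n(p)|/m^(n−1)`:
`|N(A)| ≥ |A| + max_{p ∈ P} |A ∩ E_m^n(p)| + (m^(n−1)/√(ℓ³mn))·Σ_{p ∈ P} α_p(1−α_p)`. -/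
theorem stmt_19 (m n : ℕ) (hm : 3 ≤ m) (hmo : Odd m) (hn : 1 ≤ n)
    (P : Set (ZMod m)) (hPne : P.Nonempty) (hPind : ∀ p ∈ P, p + 1 ∉ P)
    (A : Set (Fin n → ZMod m)) (hA : A ⊆ ⋃ p ∈ P, Eclass m n p) :
    (A.ncard : ℝ) + (⨆ p ∈ P, ((A ∩ Eclass m n p).ncard : ℝ)) +
        (m : ℝ) ^ (n - 1) / Real.sqrt (((m / 2 : ℕ) : ℝ) ^ 3 * m * n) *
          ∑ᶠ p ∈ P, ((A ∩ Eclass m n p).ncard / (m : ℝ) ^ (n - 1)) *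
            (1 - ((A ∩ Eclass m n p).ncard : ℝ) / (m : ℝ) ^ (n - 1)) ≤
      ((nbhd (torus m n) A).ncard : ℝ) := by
  classical
  haveI : NeZero m := ⟨by omega⟩
  haveI : Fact (1 < m) := ⟨by omega⟩
  obtain ⟨ℓ, hm2⟩ := hmo
  have hl1 : 1 ≤ ℓ := by omega
  have hml : m / 2 = ℓ := by omega
  obtain ⟨k, rfl⟩ : ∃ k, n = k + 1 := ⟨n - 1, by omega⟩
  have hnk : k + 1 - 1 = k := rfl
  set N : ℝ := (m:ℝ)^k with hN
  have hN0 : (0:ℝ) < N := by positivity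
  -- Finset versions
  set Af := (Set.toFinite A).toFinset with hAfdef
  have hAf : ∀ v, v ∈ Af ↔ v ∈ A := fun v => Set.Finite.mem_toFinset _
  set Pf := (Set.toFinite P).toFinset with hPfdef
  have hPf : ∀ p, p ∈ Pf ↔ p ∈ P := fun p => Set.Finite.mem_toFinset _
  set nbhdF := (Set.toFinite (nbhd (torus m (k+1)) A)).toFinset with hnbhdFdef
  have hnbhdF : ∀ v, v ∈ nbhdF ↔ v ∈ nbhd (torus m (k+1)) A :=
    fun v => Set.Finite.mem_toFinset _
  set Bp : ZMod m → Finset (Fin (k+1) → ZMod m) :=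
    fun p => Af.filter (fun v => ∑ i, v i = p) with hBpdef
  set a : ZMod m → ℕ := fun p => (Bp p).card with hadef
  set Epf : ZMod m → Finset (Fin (k+1) → ZMod m) :=
    fun q => Finset.univ.filter (fun v => ∑ i, v i = q) with hEpfdef
  have hBcls : ∀ p, ∀ v ∈ Bp p, ∑ i, v i = p := by
    intro p v hv; exact (Finset.mem_filter.1 hv).2
  have hBA : ∀ p, ∀ v ∈ Bp p, v ∈ A := by
    intro p v hv; exact (hAf v).1 (Finset.mem_filter.1 hv).1
  -- ncard identification
  have hnc : ∀ p, (A ∩ Eclass m (k+1) p).ncard = a p := by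
    intro p
    have he : A ∩ Eclass m (k+1) p = ↑(Bp p) := by
      ext v
      simp only [Set.mem_inter_iff, Eclass, Set.mem_setOf_eq, hBpdef, Finset.coe_filter,
        hAf]
    rw [he, Set.ncard_coe_finset]
  -- |A| = ∑ a p
  have hAcard : A.ncard = ∑ p ∈ Pf, a p := by
    have hU : Af = Pf.biUnion Bp := by
      ext v
      simp only [Finset.mem_biUnion]
      constructor
      · intro hv
        have hvA := (hAf v).1 hv
        obtain ⟨p, hp, hvp⟩ := Set.mem_iUnion₂.1 (hA hvA)
        exact ⟨p, (hPf p).2 hp, Finset.mem_filter.2 ⟨hv, hvp⟩⟩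
      · rintro ⟨p, -, hv⟩
        exact (Finset.mem_filter.1 hv).1
    have hdisj : ∀ p ∈ Pf, ∀ q ∈ Pf, p ≠ q → Disjoint (Bp p) (Bp q) := by
      intro p _ q _ hpq
      rw [Finset.disjoint_left]
      intro v hvp hvq
      exact hpq ((hBcls p v hvp).symm.trans (hBcls q v hvq))
    rw [Set.ncard_eq_toFinset_card A, ← hAfdef, hU, Finset.card_biUnion hdisj]
  -- a p ≤ m^k
  have haN : ∀ p, a p ≤ m^k := by
    intro p
    rw [← classCard p]
    apply Finset.card_le_card
    intro v hv
    exact Finset.mem_filter.2 ⟨Finset.mem_univ _, hBcls p v hv⟩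
  have haN' : ∀ p, ((a p : ℝ)) ≤ N := by
    intro p; rw [hN]; exact_mod_cast haN p
  have ha0 : ∀ p, (0:ℝ) ≤ (a p : ℝ) := fun p => Nat.cast_nonneg _
  -- neighborhood subset lemmas
  have hupN : ∀ p ∈ Pf, upT (Bp p) ⊆ nbhdF ∩ Epf (p+1) := by
    intro p hp x hx
    rw [mem_upT] at hx
    obtain ⟨j, v, hv, rfl⟩ := hx
    have hsum : ∑ i, (v + Pi.single j 1 : Fin (k+1) → ZMod m) i = p + 1 := by
      rw [sum_shift, hBcls p v hv]
    refine Finset.mem_inter.2 ⟨?_, Finset.mem_filter.2 ⟨Finset.mem_univ _, hsum⟩⟩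
    rw [hnbhdF]
    constructor
    · refine Set.mem_iUnion₂.2 ⟨v, hBA p v hv, ?_⟩
      rw [SimpleGraph.mem_neighborSet]
      show (SimpleGraph.fromRel _).Adj v (v + Pi.single j 1)
      rw [SimpleGraph.fromRel_adj]
      constructor
      · intro hEq
        have h1 := congrFun hEq j
        simp only [Pi.add_apply, Pi.single_eq_same] at h1
        exact one_ne_zero (left_eq_add.1 h1)
      · refine Or.inr ⟨j, Or.inl (by simp), fun i hij => ?_⟩
        simp [Pi.single_apply, hij]
    · intro hxA
      obtain ⟨q, hq, hxq⟩ := Set.mem_iUnion₂.1 (hA hxA)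
      have : q = p + 1 := by rw [← hxq]; exact hsum.symm ▸ rfl
      rw [this] at hq
      exact hPind p ((hPf p).1 hp) hq
  have hdnN : ∀ p ∈ Pf, dnT (Bp p) ⊆ nbhdF ∩ Epf (p-1) := by
    intro p hp x hx
    rw [mem_dnT] at hx
    obtain ⟨j, v, hv, rfl⟩ := hx
    have hsum : ∑ i, (v - Pi.single j 1 : Fin (k+1) → ZMod m) i = p - 1 := by
      rw [sum_shift', hBcls p v hv]
    refine Finset.mem_inter.2 ⟨?_, Finset.mem_filter.2 ⟨Finset.mem_univ _, hsum⟩⟩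
    rw [hnbhdF]
    constructor
    · refine Set.mem_iUnion₂.2 ⟨v, hBA p v hv, ?_⟩
      rw [SimpleGraph.mem_neighborSet]
      show (SimpleGraph.fromRel _).Adj v (v - Pi.single j 1)
      rw [SimpleGraph.fromRel_adj]
      constructor
      · intro hEq
        have h1 := congrFun hEq j
        simp only [Pi.sub_apply, Pi.single_eq_same] at h1
        have h2 : v j + 1 = v j := eq_sub_iff_add_eq.1 h1
        exact one_ne_zero (add_eq_left.1 h2)
      · refine Or.inl ⟨j, Or.inl (by simp), fun i hij => ?_⟩
        simp [Pi.single_apply, hij]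
    · intro hxA
      obtain ⟨q, hq, hxq⟩ := Set.mem_iUnion₂.1 (hA hxA)
      have hq' : q = p - 1 := by rw [← hxq]; exact hsum.symm ▸ rfl
      rw [hq'] at hq
      have : (p - 1) + 1 ∈ P := by rw [sub_add_cancel]; exact (hPf p).1 hp
      exact hPind (p-1) hq this
  -- per-class error terms
  set C : ℝ := Real.sqrt ((ℓ:ℝ)^3*(m:ℝ)*((k:ℝ)+1)) with hCdef
  have hC0 : 0 < C := Real.sqrt_pos.2 (by positivity)
  set coeff : ℝ := N / C with hcoeffdef
  have hcoeff0 : 0 ≤ coeff := by positivity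
  set err : ZMod m → ℝ := fun p => (a p:ℝ)/N*(1 - (a p:ℝ)/N) with herrdef
  have herr0 : ∀ p, 0 ≤ err p := by
    intro p
    have h1 : (a p:ℝ)/N ≤ 1 := by
      rw [div_le_one hN0]; exact haN' p
    have h2 : 0 ≤ (a p:ℝ)/N := by positivity
    exact mul_nonneg h2 (by linarith)
  set X : ZMod m → ℝ := fun p => (a p:ℝ)*(N - (a p:ℝ))/N with hXdef
  have hXeq : ∀ p, coeff * err p = X p / C := by
    intro p
    rw [hcoeffdef, herrdef, hXdef]
    field_simp
  have hX0 : ∀ p, 0 ≤ X p := by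
    intro p
    exact div_nonneg (mul_nonneg (ha0 p) (by linarith [haN' p])) hN0.le
  have hkey0 : ∀ p, coeff * err p ≤ X p/((ℓ:ℝ)^2*Real.sqrt (2*(k:ℝ))) := by
    intro p
    rcases Nat.eq_zero_or_pos k with hk0|hk1
    · have hXz : X p = 0 := by
        have ha1 : a p ≤ 1 := by have := haN p; rwa [hk0, pow_zero] at this
        have hN1 : N = 1 := by rw [hN, hk0, pow_zero]
        rcases Nat.le_one_iff_eq_zero_or_eq_one.1 ha1 with h|h <;>
          · rw [hXdef]; simp [h, hN1]
      rw [hXeq p, hXz]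
      simp
    · rw [hXeq p, hCdef]
      exact coeffLe (m:ℝ) (ℓ:ℝ) (X p) k hk1 (by exact_mod_cast hm2) (by exact_mod_cast hl1)
        (hX0 p)
  have keyUp : ∀ p ∈ Pf, (a p:ℝ) + coeff * err p ≤ ((nbhdF ∩ Epf (p+1)).card:ℝ) := by
    intro p hp
    have h1 := percUp hm2 hl1 (Bp p) (hBcls p)
    have h2 : ((upT (Bp p)).card:ℝ) ≤ ((nbhdF ∩ Epf (p+1)).card:ℝ) := by
      exact_mod_cast Finset.card_le_card (hupN p hp)
    have h3 := hkey0 p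
    calc (a p:ℝ) + coeff * err p ≤ (a p:ℝ) + X p/((ℓ:ℝ)^2*Real.sqrt (2*(k:ℝ))) := by linarith
      _ ≤ ((upT (Bp p)).card:ℝ) := h1
      _ ≤ _ := h2
  have keyDn : ∀ p ∈ Pf, (a p:ℝ) + coeff * err p ≤ ((nbhdF ∩ Epf (p-1)).card:ℝ) := by
    intro p hp
    have h1 := percDn hm2 hl1 (Bp p) (hBcls p)
    have h2 : ((dnT (Bp p)).card:ℝ) ≤ ((nbhdF ∩ Epf (p-1)).card:ℝ) := by
      exact_mod_cast Finset.card_le_card (hdnN p hp)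
    have h3 := hkey0 p
    calc (a p:ℝ) + coeff * err p ≤ (a p:ℝ) + X p/((ℓ:ℝ)^2*Real.sqrt (2*(k:ℝ))) := by linarith
      _ ≤ ((dnT (Bp p)).card:ℝ) := h1
      _ ≤ _ := h2
  -- choose the maximizing class
  have hPfne : Pf.Nonempty := by
    obtain ⟨p0, hp0⟩ := hPne
    exact ⟨p0, (hPf p0).2 hp0⟩
  obtain ⟨pstar, hpstarPf, hpstarMax⟩ := Finset.exists_max_image Pf a hPfne
  have hpstarP : pstar ∈ P := (hPf pstar).1 hpstarPf
  -- chain of +2 steps from pstar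
  have hwit : 0 < (m+1)/2 ∧ (pstar + ((2*((m+1)/2) : ℕ) : ZMod m)) ∉ P := by
    refine ⟨by omega, ?_⟩
    have h2i : (2*((m+1)/2) : ℕ) = m + 1 := by omega
    rw [h2i]
    push_cast
    rw [ZMod.natCast_self]
    simpa using hPind pstar hpstarP
  have hex : ∃ i, 0 < i ∧ (pstar + ((2*i : ℕ) : ZMod m)) ∉ P := ⟨(m+1)/2, hwit⟩
  set r := Nat.find hex with hrdef
  have hr := Nat.find_spec hex
  have hr1 : 0 < r := hr.1
  have hrP : (pstar + ((2*r : ℕ) : ZMod m)) ∉ P := hr.2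
  have hrle : r ≤ (m+1)/2 := Nat.find_le hwit
  set Rset := (Finset.range r).image (fun i => pstar + ((2*i : ℕ) : ZMod m)) with hRsetdef
  have hmemR : ∀ q, q ∈ Rset ↔ ∃ i, i < r ∧ q = pstar + ((2*i:ℕ) : ZMod m) := by
    intro q
    simp only [hRsetdef, Finset.mem_image, Finset.mem_range]
    constructor
    · rintro ⟨i, hi, rfl⟩; exact ⟨i, hi, rfl⟩
    · rintro ⟨i, hi, rfl⟩; exact ⟨i, hi, rfl⟩
  set ψ : ZMod m → ZMod m := fun p => if p ∈ Rset then p + 1 else p - 1 with hψdef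
  have hcross : ∀ x y, x ∈ Rset → y ∉ Rset → y ∈ P → x + 1 = y - 1 → False := by
    intro x y hxR hyR hyP h
    obtain ⟨i, hir, rfl⟩ := (hmemR x).1 hxR
    have hy : y = pstar + ((2*(i+1) : ℕ) : ZMod m) := by
      push_cast
      push_cast at h
      linear_combination -h
    rcases lt_or_eq_of_le (Nat.succ_le_of_lt hir) with h2|h2
    · exact hyR ((hmemR y).2 ⟨i+1, h2, hy⟩)
    · rw [← h2] at hrP
      rw [← hy] at hrP
      exact hrP hyP
  have hψinj : ∀ x ∈ Pf, ∀ y ∈ Pf, ψ x = ψ y → x = y := by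
    intro x hx y hy h
    by_cases hxR : x ∈ Rset <;> by_cases hyR : y ∈ Rset
    · rw [hψdef] at h; simp only [if_pos hxR, if_pos hyR] at h; exact add_right_cancel h
    · rw [hψdef] at h; simp only [if_pos hxR, if_neg hyR] at h
      exact absurd h (fun h => hcross x y hxR hyR ((hPf y).1 hy) h)
    · rw [hψdef] at h; simp only [if_neg hxR, if_pos hyR] at h
      exact absurd h.symm (fun h => hcross y x hyR hxR ((hPf x).1 hx) h)
    · rw [hψdef] at h; simp only [if_neg hxR, if_neg hyR] at h; exact sub_left_inj.1 h
  have hcop : Nat.Coprime m 2 := Nat.coprime_two_right.2 ⟨ℓ, by omega⟩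
  have hextra : ∀ p ∈ Pf, ψ p ≠ pstar - 1 := by
    intro p hp
    by_cases hpR : p ∈ Rset
    · rw [hψdef]; simp only [if_pos hpR]
      intro h
      obtain ⟨i, hir, rfl⟩ := (hmemR p).1 hpR
      have hz : ((2*(i+1) : ℕ) : ZMod m) = 0 := by
        push_cast
        push_cast at h
        linear_combination h
      rw [ZMod.natCast_eq_zero_iff] at hz
      have hdvd : m ∣ (i+1) := hcop.dvd_of_dvd_mul_left hz
      have hile : i + 1 ≤ r := hir
      have him : i + 1 < m := by omega
      have := Nat.le_of_dvd (by omega) hdvd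
      omega
    · rw [hψdef]; simp only [if_neg hpR]
      intro h
      have hps : p = pstar := sub_left_inj.1 h
      apply hpR
      rw [hps, hmemR]
      exact ⟨0, hr1, by simp⟩
  set Tf := Pf.image ψ ∪ {pstar - 1} with hTfdef
  have hTdisj : Disjoint (Pf.image ψ) ({pstar - 1} : Finset (ZMod m)) := by
    rw [Finset.disjoint_singleton_right]
    intro hmem
    rw [Finset.mem_image] at hmem
    obtain ⟨p, hp, hψp⟩ := hmem
    exact hextra p hp hψp
  have hclsdisj : ∀ q ∈ Tf, ∀ q' ∈ Tf, q ≠ q' →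
      Disjoint (nbhdF ∩ Epf q) (nbhdF ∩ Epf q') := by
    intro q _ q' _ hqq'
    rw [Finset.disjoint_left]
    intro v hv hv'
    have h1 := (Finset.mem_filter.1 (Finset.mem_inter.1 hv).2).2
    have h2 := (Finset.mem_filter.1 (Finset.mem_inter.1 hv').2).2
    exact hqq' (h1.symm.trans h2)
  have hcount : ∑ q ∈ Tf, (nbhdF ∩ Epf q).card ≤ nbhdF.card := by
    rw [← Finset.card_biUnion hclsdisj]
    apply Finset.card_le_card
    intro v hv
    obtain ⟨q, -, hvq⟩ := Finset.mem_biUnion.1 hv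
    exact (Finset.mem_inter.1 hvq).1
  have hsumT : ∑ p ∈ Pf, ((a p:ℝ) + coeff * err p) + (a pstar : ℝ)
      ≤ ∑ q ∈ Tf, ((nbhdF ∩ Epf q).card : ℝ) := by
    rw [hTfdef, Finset.sum_union hTdisj, Finset.sum_singleton,
      Finset.sum_image (fun x hx y hy h => hψinj x hx y hy h)]
    have hterm : ∀ p ∈ Pf, (a p:ℝ) + coeff * err p ≤ ((nbhdF ∩ Epf (ψ p)).card : ℝ) := by
      intro p hp
      by_cases hpR : p ∈ Rset
      · rw [hψdef]; simp only [if_pos hpR]; exact keyUp p hp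
      · rw [hψdef]; simp only [if_neg hpR]; exact keyDn p hp
    have hlast : (a pstar : ℝ) ≤ ((nbhdF ∩ Epf (pstar - 1)).card : ℝ) := by
      have h1 := keyDn pstar hpstarPf
      have h2 := mul_nonneg hcoeff0 (herr0 pstar)
      linarith
    exact add_le_add (Finset.sum_le_sum hterm) hlast
  -- final assembly
  have hsup : (⨆ p ∈ P, ((A ∩ Eclass m (k+1) p).ncard : ℝ)) ≤ (a pstar : ℝ) := by
    apply Real.iSup_le _ (ha0 pstar)
    intro p
    apply Real.iSup_le _ (ha0 pstar)
    intro hp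
    rw [hnc p]
    exact_mod_cast hpstarMax p ((hPf p).2 hp)
  have hfin : (∑ᶠ p ∈ P, (((A ∩ Eclass m (k+1) p).ncard : ℝ) / (m : ℝ) ^ (k+1-1)) *
      (1 - ((A ∩ Eclass m (k+1) p).ncard : ℝ) / (m : ℝ) ^ (k+1-1))) = ∑ p ∈ Pf, err p := by
    rw [← Set.Finite.coe_toFinset (Set.toFinite P), finsum_mem_coe_finset]
    apply Finset.sum_congr rfl
    intro p hp
    rw [hnc p, herrdef, hN]
    norm_num
  have hcoefeq : (m : ℝ) ^ (k+1-1) / Real.sqrt (((m / 2 : ℕ) : ℝ) ^ 3 * m * (k+1:ℕ)) = coeff := by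
    rw [hcoeffdef, hCdef, hN, hml]
    have e1 : k+1-1 = k := rfl
    rw [e1]
    push_cast
    ring_nf
  have hncb : ((nbhd (torus m (k+1)) A).ncard : ℝ) = (nbhdF.card : ℝ) := by
    rw [hnbhdFdef, Set.ncard_eq_toFinset_card]
  have hAc : (A.ncard : ℝ) = ∑ p ∈ Pf, (a p : ℝ) := by
    rw [hAcard]; push_cast; rfl
  rw [hncb, hAc, hfin, hcoefeq]
  have hms : coeff * ∑ p ∈ Pf, err p = ∑ p ∈ Pf, coeff * err p := Finset.mul_sum _ _ _
  have hsplit : ∑ p ∈ Pf, ((a p:ℝ) + coeff * err p)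
      = ∑ p ∈ Pf, (a p:ℝ) + ∑ p ∈ Pf, coeff*err p := Finset.sum_add_distrib
  have hcountR : (∑ q ∈ Tf, ((nbhdF ∩ Epf q).card : ℝ)) ≤ (nbhdF.card : ℝ) := by
    rw [← Nat.cast_sum]
    exact_mod_cast hcount
  linarith [hsumT, hsup, hcountR]
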